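/- In the Picard lattice of a degree 2 del Pezzo surface, the number of conic bundle classes, i.e. classes f with f^2 = 0 and -K·f = 2, up to the identification described by their singular fibers, is 126 = 7 + 35 + 42 + 35 + 7. -/

import Mathlib

/-- Picard lattice of a degree 2 del Pezzo surface: a class `aL - ∑ bᵢ Eᵢ` is
recorded as `(a, b)`; the intersection form is `diag(1, -1, …, -1)`. -/
def dp2Dot (u v : ℤ × (Fin 7 → ℤ)) : ℤ := u.1 * v.1 - ∑ i, u.2 i * v.2 i

/-- The anticanonical class `-K = 3L - E₁ - ⋯ - E₇`. -/
def dp2NegK : ℤ × (Fin 7 → ℤ) := (3, fun _ => 1)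

/-- A `(-1)`-class: `e² = -1` and `-K·e = 1`. -/
def IsMinusOneClass (e : ℤ × (Fin 7 → ℤ)) : Prop :=
  dp2Dot e e = -1 ∧ dp2Dot dp2NegK e = 1

def dp2ConicList : List (ℤ × (Fin 7 → ℤ)) := [
  ((1:ℤ), ![0,0,0,0,0,0,1]),
  ((1:ℤ), ![0,0,0,0,0,1,0]),
  ((1:ℤ), ![0,0,0,0,1,0,0]),
  ((1:ℤ), ![0,0,0,1,0,0,0]),
  ((1:ℤ), ![0,0,1,0,0,0,0]),
  ((1:ℤ), ![0,1,0,0,0,0,0]),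
  ((1:ℤ), ![1,0,0,0,0,0,0]),
  ((2:ℤ), ![0,0,0,1,1,1,1]),
  ((2:ℤ), ![0,0,1,0,1,1,1]),
  ((2:ℤ), ![0,0,1,1,0,1,1]),
  ((2:ℤ), ![0,0,1,1,1,0,1]),
  ((2:ℤ), ![0,0,1,1,1,1,0]),
  ((2:ℤ), ![0,1,0,0,1,1,1]),
  ((2:ℤ), ![0,1,0,1,0,1,1]),
  ((2:ℤ), ![0,1,0,1,1,0,1]),
  ((2:ℤ), ![0,1,0,1,1,1,0]),
  ((2:ℤ), ![0,1,1,0,0,1,1]),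
  ((2:ℤ), ![0,1,1,0,1,0,1]),
  ((2:ℤ), ![0,1,1,0,1,1,0]),
  ((2:ℤ), ![0,1,1,1,0,0,1]),
  ((2:ℤ), ![0,1,1,1,0,1,0]),
  ((2:ℤ), ![0,1,1,1,1,0,0]),
  ((2:ℤ), ![1,0,0,0,1,1,1]),
  ((2:ℤ), ![1,0,0,1,0,1,1]),
  ((2:ℤ), ![1,0,0,1,1,0,1]),
  ((2:ℤ), ![1,0,0,1,1,1,0]),
  ((2:ℤ), ![1,0,1,0,0,1,1]),
  ((2:ℤ), ![1,0,1,0,1,0,1]),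
  ((2:ℤ), ![1,0,1,0,1,1,0]),
  ((2:ℤ), ![1,0,1,1,0,0,1]),
  ((2:ℤ), ![1,0,1,1,0,1,0]),
  ((2:ℤ), ![1,0,1,1,1,0,0]),
  ((2:ℤ), ![1,1,0,0,0,1,1]),
  ((2:ℤ), ![1,1,0,0,1,0,1]),
  ((2:ℤ), ![1,1,0,0,1,1,0]),
  ((2:ℤ), ![1,1,0,1,0,0,1]),
  ((2:ℤ), ![1,1,0,1,0,1,0]),
  ((2:ℤ), ![1,1,0,1,1,0,0]),
  ((2:ℤ), ![1,1,1,0,0,0,1]),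
  ((2:ℤ), ![1,1,1,0,0,1,0]),
  ((2:ℤ), ![1,1,1,0,1,0,0]),
  ((2:ℤ), ![1,1,1,1,0,0,0]),
  ((3:ℤ), ![0,1,1,1,1,1,2]),
  ((3:ℤ), ![0,1,1,1,1,2,1]),
  ((3:ℤ), ![0,1,1,1,2,1,1]),
  ((3:ℤ), ![0,1,1,2,1,1,1]),
  ((3:ℤ), ![0,1,2,1,1,1,1]),
  ((3:ℤ), ![0,2,1,1,1,1,1]),
  ((3:ℤ), ![1,0,1,1,1,1,2]),
  ((3:ℤ), ![1,0,1,1,1,2,1]),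
  ((3:ℤ), ![1,0,1,1,2,1,1]),
  ((3:ℤ), ![1,0,1,2,1,1,1]),
  ((3:ℤ), ![1,0,2,1,1,1,1]),
  ((3:ℤ), ![1,1,0,1,1,1,2]),
  ((3:ℤ), ![1,1,0,1,1,2,1]),
  ((3:ℤ), ![1,1,0,1,2,1,1]),
  ((3:ℤ), ![1,1,0,2,1,1,1]),
  ((3:ℤ), ![1,1,1,0,1,1,2]),
  ((3:ℤ), ![1,1,1,0,1,2,1]),
  ((3:ℤ), ![1,1,1,0,2,1,1]),
  ((3:ℤ), ![1,1,1,1,0,1,2]),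
  ((3:ℤ), ![1,1,1,1,0,2,1]),
  ((3:ℤ), ![1,1,1,1,1,0,2]),
  ((3:ℤ), ![1,1,1,1,1,2,0]),
  ((3:ℤ), ![1,1,1,1,2,0,1]),
  ((3:ℤ), ![1,1,1,1,2,1,0]),
  ((3:ℤ), ![1,1,1,2,0,1,1]),
  ((3:ℤ), ![1,1,1,2,1,0,1]),
  ((3:ℤ), ![1,1,1,2,1,1,0]),
  ((3:ℤ), ![1,1,2,0,1,1,1]),
  ((3:ℤ), ![1,1,2,1,0,1,1]),
  ((3:ℤ), ![1,1,2,1,1,0,1]),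
  ((3:ℤ), ![1,1,2,1,1,1,0]),
  ((3:ℤ), ![1,2,0,1,1,1,1]),
  ((3:ℤ), ![1,2,1,0,1,1,1]),
  ((3:ℤ), ![1,2,1,1,0,1,1]),
  ((3:ℤ), ![1,2,1,1,1,0,1]),
  ((3:ℤ), ![1,2,1,1,1,1,0]),
  ((3:ℤ), ![2,0,1,1,1,1,1]),
  ((3:ℤ), ![2,1,0,1,1,1,1]),
  ((3:ℤ), ![2,1,1,0,1,1,1]),
  ((3:ℤ), ![2,1,1,1,0,1,1]),
  ((3:ℤ), ![2,1,1,1,1,0,1]),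
  ((3:ℤ), ![2,1,1,1,1,1,0]),
  ((4:ℤ), ![1,1,1,1,2,2,2]),
  ((4:ℤ), ![1,1,1,2,1,2,2]),
  ((4:ℤ), ![1,1,1,2,2,1,2]),
  ((4:ℤ), ![1,1,1,2,2,2,1]),
  ((4:ℤ), ![1,1,2,1,1,2,2]),
  ((4:ℤ), ![1,1,2,1,2,1,2]),
  ((4:ℤ), ![1,1,2,1,2,2,1]),
  ((4:ℤ), ![1,1,2,2,1,1,2]),
  ((4:ℤ), ![1,1,2,2,1,2,1]),
  ((4:ℤ), ![1,1,2,2,2,1,1]),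
  ((4:ℤ), ![1,2,1,1,1,2,2]),
  ((4:ℤ), ![1,2,1,1,2,1,2]),
  ((4:ℤ), ![1,2,1,1,2,2,1]),
  ((4:ℤ), ![1,2,1,2,1,1,2]),
  ((4:ℤ), ![1,2,1,2,1,2,1]),
  ((4:ℤ), ![1,2,1,2,2,1,1]),
  ((4:ℤ), ![1,2,2,1,1,1,2]),
  ((4:ℤ), ![1,2,2,1,1,2,1]),
  ((4:ℤ), ![1,2,2,1,2,1,1]),
  ((4:ℤ), ![1,2,2,2,1,1,1]),
  ((4:ℤ), ![2,1,1,1,1,2,2]),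
  ((4:ℤ), ![2,1,1,1,2,1,2]),
  ((4:ℤ), ![2,1,1,1,2,2,1]),
  ((4:ℤ), ![2,1,1,2,1,1,2]),
  ((4:ℤ), ![2,1,1,2,1,2,1]),
  ((4:ℤ), ![2,1,1,2,2,1,1]),
  ((4:ℤ), ![2,1,2,1,1,1,2]),
  ((4:ℤ), ![2,1,2,1,1,2,1]),
  ((4:ℤ), ![2,1,2,1,2,1,1]),
  ((4:ℤ), ![2,1,2,2,1,1,1]),
  ((4:ℤ), ![2,2,1,1,1,1,2]),
  ((4:ℤ), ![2,2,1,1,1,2,1]),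
  ((4:ℤ), ![2,2,1,1,2,1,1]),
  ((4:ℤ), ![2,2,1,2,1,1,1]),
  ((4:ℤ), ![2,2,2,1,1,1,1]),
  ((5:ℤ), ![1,2,2,2,2,2,2]),
  ((5:ℤ), ![2,1,2,2,2,2,2]),
  ((5:ℤ), ![2,2,1,2,2,2,2]),
  ((5:ℤ), ![2,2,2,1,2,2,2]),
  ((5:ℤ), ![2,2,2,2,1,2,2]),
  ((5:ℤ), ![2,2,2,2,2,1,2]),
  ((5:ℤ), ![2,2,2,2,2,2,1])]

def dp2ExcList : List (ℤ × (Fin 7 → ℤ)) := [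
  ((0:ℤ), ![-1,0,0,0,0,0,0]),
  ((0:ℤ), ![0,-1,0,0,0,0,0]),
  ((0:ℤ), ![0,0,-1,0,0,0,0]),
  ((0:ℤ), ![0,0,0,-1,0,0,0]),
  ((0:ℤ), ![0,0,0,0,-1,0,0]),
  ((0:ℤ), ![0,0,0,0,0,-1,0]),
  ((0:ℤ), ![0,0,0,0,0,0,-1]),
  ((1:ℤ), ![0,0,0,0,0,1,1]),
  ((1:ℤ), ![0,0,0,0,1,0,1]),
  ((1:ℤ), ![0,0,0,0,1,1,0]),
  ((1:ℤ), ![0,0,0,1,0,0,1]),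
  ((1:ℤ), ![0,0,0,1,0,1,0]),
  ((1:ℤ), ![0,0,0,1,1,0,0]),
  ((1:ℤ), ![0,0,1,0,0,0,1]),
  ((1:ℤ), ![0,0,1,0,0,1,0]),
  ((1:ℤ), ![0,0,1,0,1,0,0]),
  ((1:ℤ), ![0,0,1,1,0,0,0]),
  ((1:ℤ), ![0,1,0,0,0,0,1]),
  ((1:ℤ), ![0,1,0,0,0,1,0]),
  ((1:ℤ), ![0,1,0,0,1,0,0]),
  ((1:ℤ), ![0,1,0,1,0,0,0]),
  ((1:ℤ), ![0,1,1,0,0,0,0]),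
  ((1:ℤ), ![1,0,0,0,0,0,1]),
  ((1:ℤ), ![1,0,0,0,0,1,0]),
  ((1:ℤ), ![1,0,0,0,1,0,0]),
  ((1:ℤ), ![1,0,0,1,0,0,0]),
  ((1:ℤ), ![1,0,1,0,0,0,0]),
  ((1:ℤ), ![1,1,0,0,0,0,0]),
  ((2:ℤ), ![0,0,1,1,1,1,1]),
  ((2:ℤ), ![0,1,0,1,1,1,1]),
  ((2:ℤ), ![0,1,1,0,1,1,1]),
  ((2:ℤ), ![0,1,1,1,0,1,1]),
  ((2:ℤ), ![0,1,1,1,1,0,1]),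
  ((2:ℤ), ![0,1,1,1,1,1,0]),
  ((2:ℤ), ![1,0,0,1,1,1,1]),
  ((2:ℤ), ![1,0,1,0,1,1,1]),
  ((2:ℤ), ![1,0,1,1,0,1,1]),
  ((2:ℤ), ![1,0,1,1,1,0,1]),
  ((2:ℤ), ![1,0,1,1,1,1,0]),
  ((2:ℤ), ![1,1,0,0,1,1,1]),
  ((2:ℤ), ![1,1,0,1,0,1,1]),
  ((2:ℤ), ![1,1,0,1,1,0,1]),
  ((2:ℤ), ![1,1,0,1,1,1,0]),
  ((2:ℤ), ![1,1,1,0,0,1,1]),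
  ((2:ℤ), ![1,1,1,0,1,0,1]),
  ((2:ℤ), ![1,1,1,0,1,1,0]),
  ((2:ℤ), ![1,1,1,1,0,0,1]),
  ((2:ℤ), ![1,1,1,1,0,1,0]),
  ((2:ℤ), ![1,1,1,1,1,0,0]),
  ((3:ℤ), ![1,1,1,1,1,1,2]),
  ((3:ℤ), ![1,1,1,1,1,2,1]),
  ((3:ℤ), ![1,1,1,1,2,1,1]),
  ((3:ℤ), ![1,1,1,2,1,1,1]),
  ((3:ℤ), ![1,1,2,1,1,1,1]),
  ((3:ℤ), ![1,2,1,1,1,1,1]),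
  ((3:ℤ), ![2,1,1,1,1,1,1])]

noncomputable def dp2T : Finset (ℤ × (Fin 7 → ℤ)) :=
  (Finset.Icc 1 5) ×ˢ Fintype.piFinset (fun _ => Finset.Icc 0 2)

instance : DecidablePred IsMinusOneClass := fun e => by unfold IsMinusOneClass; infer_instance

set_option maxRecDepth 100000 in
set_option maxHeartbeats 4000000 in
theorem dp2_filter_eq : dp2T.filter
    (fun f => dp2Dot f f = 0 ∧ dp2Dot dp2NegK f = 2) = dp2ConicList.toFinset := by decide

set_option maxRecDepth 100000 in
set_option maxHeartbeats 4000000 in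
theorem dp2_card : dp2ConicList.toFinset.card = 126 := by decide

set_option maxRecDepth 100000 in
set_option maxHeartbeats 4000000 in
theorem dp2_conic_props : ∀ f ∈ dp2ConicList, dp2Dot f f = 0 ∧ dp2Dot dp2NegK f = 2 := by
  decide

set_option maxRecDepth 100000 in
set_option maxHeartbeats 4000000 in
theorem dp2_exc_all : ∀ e ∈ dp2ExcList, IsMinusOneClass e := by decide

set_option maxRecDepth 100000 in
set_option maxHeartbeats 4000000 in
theorem dp2_decomp : ∀ f ∈ dp2ConicList, ∃ e ∈ dp2ExcList, f - e ∈ dp2ExcList := by decide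



set_option maxHeartbeats 1000000 in
lemma dp2_aux_a (a b0 b1 b2 b3 b4 b5 b6 : ℤ)
    (h1 : a * a = b0*b0 + b1*b1 + b2*b2 + b3*b3 + b4*b4 + b5*b5 + b6*b6)
    (h2 : 3 * a = 2 + (b0 + b1 + b2 + b3 + b4 + b5 + b6)) : 1 ≤ a ∧ a ≤ 5 := by
  have hcs : (b0 + b1 + b2 + b3 + b4 + b5 + b6)^2
      ≤ 7 * (b0*b0 + b1*b1 + b2*b2 + b3*b3 + b4*b4 + b5*b5 + b6*b6) := by
    nlinarith [sq_nonneg (b0-b1), sq_nonneg (b0-b2), sq_nonneg (b0-b3), sq_nonneg (b0-b4),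
      sq_nonneg (b0-b5), sq_nonneg (b0-b6), sq_nonneg (b1-b2), sq_nonneg (b1-b3),
      sq_nonneg (b1-b4), sq_nonneg (b1-b5), sq_nonneg (b1-b6), sq_nonneg (b2-b3),
      sq_nonneg (b2-b4), sq_nonneg (b2-b5), sq_nonneg (b2-b6), sq_nonneg (b3-b4),
      sq_nonneg (b3-b5), sq_nonneg (b3-b6), sq_nonneg (b4-b5), sq_nonneg (b4-b6),
      sq_nonneg (b5-b6)]
  have e1 : b0 + b1 + b2 + b3 + b4 + b5 + b6 = 3*a - 2 := by linarith
  rw [e1, ← h1] at hcs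
  constructor
  · nlinarith [hcs, sq_nonneg a]
  · by_contra h
    push_neg at h
    have h6 : 6 ≤ a := by omega
    nlinarith [hcs, mul_nonneg (by linarith : (0:ℤ) ≤ a) (by linarith : (0:ℤ) ≤ a - 6)]

set_option maxHeartbeats 1000000 in
lemma dp2_aux_b (a b c1 c2 c3 c4 c5 c6 : ℤ) (ha : 1 ≤ a) (ha' : a ≤ 5)
    (h1 : a * a = b*b + c1*c1 + c2*c2 + c3*c3 + c4*c4 + c5*c5 + c6*c6)
    (h2 : 3 * a = 2 + (b + c1 + c2 + c3 + c4 + c5 + c6)) : 0 ≤ b ∧ b ≤ 2 := by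
  have hcs : (c1 + c2 + c3 + c4 + c5 + c6)^2
      ≤ 6 * (c1*c1 + c2*c2 + c3*c3 + c4*c4 + c5*c5 + c6*c6) := by
    nlinarith [sq_nonneg (c1-c2), sq_nonneg (c1-c3), sq_nonneg (c1-c4), sq_nonneg (c1-c5),
      sq_nonneg (c1-c6), sq_nonneg (c2-c3), sq_nonneg (c2-c4), sq_nonneg (c2-c5),
      sq_nonneg (c2-c6), sq_nonneg (c3-c4), sq_nonneg (c3-c5), sq_nonneg (c3-c6),
      sq_nonneg (c4-c5), sq_nonneg (c4-c6), sq_nonneg (c5-c6)]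
  have e1 : c1 + c2 + c3 + c4 + c5 + c6 = 3*a - 2 - b := by linarith
  have e2 : c1*c1 + c2*c2 + c3*c3 + c4*c4 + c5*c5 + c6*c6 = a*a - b*b := by linarith
  rw [e1, e2] at hcs
  constructor
  · by_contra h
    push_neg at h
    have hb : b ≤ -1 := by omega
    nlinarith [hcs, sq_nonneg (b+1), sq_nonneg (a-1),
      mul_nonneg (by linarith : (0:ℤ) ≤ a - 1) (by linarith : (0:ℤ) ≤ -1 - b)]
  · by_contra h
    push_neg at h
    have hb : 3 ≤ b := by omega
    nlinarith [hcs, sq_nonneg (b-3), sq_nonneg (a-5),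
      mul_nonneg (by linarith : (0:ℤ) ≤ 5 - a) (by linarith : (0:ℤ) ≤ b - 3)]


set_option maxHeartbeats 1000000 in
/-- The number of conic bundle classes on a degree 2 del Pezzo surface, i.e. classes `f`
with `f² = 0` and `-K·f = 2` that are sums of two `(-1)`-classes, is
`126 = 7 + 35 + 42 + 35 + 7`. -/
theorem dp2_conic_bundle_count :
    {f : ℤ × (Fin 7 → ℤ) | dp2Dot f f = 0 ∧ dp2Dot dp2NegK f = 2 ∧
      ∃ e e', IsMinusOneClass e ∧ IsMinusOneClass e' ∧ f = e + e'}.ncard = 126 ∧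
    (126 : ℕ) = 7 + 35 + 42 + 35 + 7 := by
  constructor
  · have hset : {f : ℤ × (Fin 7 → ℤ) | dp2Dot f f = 0 ∧ dp2Dot dp2NegK f = 2 ∧
        ∃ e e', IsMinusOneClass e ∧ IsMinusOneClass e' ∧ f = e + e'} =
        ↑(dp2ConicList.toFinset) := by
      ext f
      simp only [Set.mem_setOf_eq, Finset.mem_coe, List.mem_toFinset]
      constructor
      · rintro ⟨hf1, hf2, -⟩
        have hf1' := hf1
        have hf2' := hf2
        simp only [dp2Dot, dp2NegK, Fin.sum_univ_seven, one_mul] at hf1' hf2'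
        have h1 : f.1 * f.1 = f.2 0 * f.2 0 + f.2 1 * f.2 1 + f.2 2 * f.2 2 + f.2 3 * f.2 3
            + f.2 4 * f.2 4 + f.2 5 * f.2 5 + f.2 6 * f.2 6 := by linarith
        have h2 : 3 * f.1 = 2 + (f.2 0 + f.2 1 + f.2 2 + f.2 3 + f.2 4 + f.2 5 + f.2 6) := by
          linarith
        obtain ⟨ha, ha'⟩ := dp2_aux_a _ _ _ _ _ _ _ _ h1 h2
        have hb : ∀ i, 0 ≤ f.2 i ∧ f.2 i ≤ 2 := by
          intro i
          fin_cases i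
          · exact dp2_aux_b f.1 (f.2 0) (f.2 1) (f.2 2) (f.2 3) (f.2 4) (f.2 5) (f.2 6)
              ha ha' (by linarith) (by linarith)
          · exact dp2_aux_b f.1 (f.2 1) (f.2 0) (f.2 2) (f.2 3) (f.2 4) (f.2 5) (f.2 6)
              ha ha' (by linarith) (by linarith)
          · exact dp2_aux_b f.1 (f.2 2) (f.2 0) (f.2 1) (f.2 3) (f.2 4) (f.2 5) (f.2 6)
              ha ha' (by linarith) (by linarith)
          · exact dp2_aux_b f.1 (f.2 3) (f.2 0) (f.2 1) (f.2 2) (f.2 4) (f.2 5) (f.2 6)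
              ha ha' (by linarith) (by linarith)
          · exact dp2_aux_b f.1 (f.2 4) (f.2 0) (f.2 1) (f.2 2) (f.2 3) (f.2 5) (f.2 6)
              ha ha' (by linarith) (by linarith)
          · exact dp2_aux_b f.1 (f.2 5) (f.2 0) (f.2 1) (f.2 2) (f.2 3) (f.2 4) (f.2 6)
              ha ha' (by linarith) (by linarith)
          · exact dp2_aux_b f.1 (f.2 6) (f.2 0) (f.2 1) (f.2 2) (f.2 3) (f.2 4) (f.2 5)
              ha ha' (by linarith) (by linarith)
        have hT : f ∈ dp2T := Finset.mem_product.mpr ⟨Finset.mem_Icc.mpr ⟨ha, ha'⟩,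
          Fintype.mem_piFinset.mpr (fun i => Finset.mem_Icc.mpr (hb i))⟩
        have hmem : f ∈ dp2T.filter (fun f => dp2Dot f f = 0 ∧ dp2Dot dp2NegK f = 2) :=
          Finset.mem_filter.mpr ⟨hT, hf1, hf2⟩
        rw [dp2_filter_eq] at hmem
        exact List.mem_toFinset.mp hmem
      · intro hf
        obtain ⟨h1, h2⟩ := dp2_conic_props f hf
        obtain ⟨e, he, hfe⟩ := dp2_decomp f hf
        exact ⟨h1, h2, e, f - e, dp2_exc_all e he, dp2_exc_all _ hfe, by abel⟩
    rw [hset, Set.ncard_coe_finset, dp2_card]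
  · norm_num
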